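/- Let Ω be an open subset of ℝ². Then for any h ∈ ℝ and r ≥ 0, the set of doubly increasing functions u : Ω → ℝ with values in [h, h+r] is a compact subset of L¹(Ω) (assuming Ω has finite measure so that these functions lie in L¹). -/

import Mathlib

open Set MeasureTheory Filter Topology

lemma lintegral_biUnion_finset_le' {ι : Type*} (s : Finset ι) (t : ι → Set (ℝ × ℝ))
    (μ : Measure (ℝ × ℝ)) (f : ℝ × ℝ → ENNReal) :
    ∫⁻ x in ⋃ b ∈ s, t b, f x ∂μ ≤ ∑ b ∈ s, ∫⁻ x in t b, f x ∂μ := by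
  classical
  induction s using Finset.induction with
  | empty => simp
  | insert _ _ hnotmem ih =>
    rename_i a s
    rw [Finset.set_biUnion_insert, Finset.sum_insert hnotmem]
    exact (lintegral_union_le _ _ _).trans (add_le_add le_rfl ih)

lemma telescope_aux (N : ℕ) (h r : ℝ) (hr : 0 ≤ r) (g : ℤ × ℤ → ℝ)
    (hg : ∀ k, g k ∈ Set.Icc h (h + r)) :
    ∑ k ∈ Finset.Ico (-(N : ℤ)) N ×ˢ Finset.Ico (-(N : ℤ)) N,
      (g (k.1 + 1, k.2 + 1) - g k) ≤ 4 * N * r := by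
  classical
  set G : Finset (ℤ × ℤ) := Finset.Ico (-(N : ℤ)) N ×ˢ Finset.Ico (-(N : ℤ)) N with hG
  set G' : Finset (ℤ × ℤ) :=
    Finset.Ico (-(N : ℤ) + 1) (N + 1) ×ˢ Finset.Ico (-(N : ℤ) + 1) (N + 1) with hG'
  have hshift : ∑ k ∈ G, g (k.1 + 1, k.2 + 1) = ∑ k ∈ G', g k := by
    refine Finset.sum_nbij' (fun k => (k.1 + 1, k.2 + 1)) (fun k => (k.1 - 1, k.2 - 1))
      ?_ ?_ ?_ ?_ ?_
    · intro a ha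
      simp only [hG, hG', Finset.mem_product, Finset.mem_Ico] at *
      omega
    · intro a ha
      simp only [hG, hG', Finset.mem_product, Finset.mem_Ico] at *
      omega
    · intro a _; ext <;> simp
    · intro a _; ext <;> simp
    · intro a _; rfl
  have hcardG : G.card = 2 * N * (2 * N) := by
    rw [hG, Finset.card_product, Int.card_Ico]
    have e : ((N : ℤ) - -(N : ℤ)).toNat = 2 * N := by omega
    rw [e]
  have hcardG' : G'.card = 2 * N * (2 * N) := by
    rw [hG', Finset.card_product, Int.card_Ico]
    have e : ((N : ℤ) + 1 - (-(N : ℤ) + 1)).toNat = 2 * N := by omega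
    rw [e]
  have hcc : (G' \ G).card = (G \ G').card := by
    have h1 := Finset.card_sdiff_add_card_inter G' G
    have h2 := Finset.card_sdiff_add_card_inter G G'
    rw [Finset.inter_comm] at h2
    omega
  have hccle : (G' \ G).card ≤ 4 * N := by
    have hsub : G' \ G ⊆
        ({(N : ℤ)} ×ˢ Finset.Ico (-(N : ℤ) + 1) (N + 1)) ∪
          (Finset.Ico (-(N : ℤ) + 1) (N + 1) ×ˢ ({(N : ℤ)} : Finset ℤ)) := by
      intro k hk
      simp only [hG, hG', Finset.mem_sdiff, Finset.mem_product, Finset.mem_Ico,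
        Finset.mem_union, Finset.mem_singleton] at *
      omega
    calc (G' \ G).card ≤ _ := Finset.card_le_card hsub
      _ ≤ ({(N : ℤ)} ×ˢ Finset.Ico (-(N : ℤ) + 1) (N + 1)).card +
          (Finset.Ico (-(N : ℤ) + 1) (N + 1) ×ˢ ({(N : ℤ)} : Finset ℤ)).card :=
        Finset.card_union_le _ _
      _ ≤ 4 * N := by
        rw [Finset.card_product, Finset.card_product, Finset.card_singleton, Int.card_Ico]
        have : (N + 1 - (-(N : ℤ) + 1)).toNat = 2 * N := by omega
        omega
  have key : ∑ k ∈ G, (g (k.1 + 1, k.2 + 1) - g k)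
      = ∑ k ∈ G' \ G, g k - ∑ k ∈ G \ G', g k := by
    rw [Finset.sum_sub_distrib, hshift, ← Finset.sum_inter_add_sum_sdiff G' G g,
      ← Finset.sum_inter_add_sum_sdiff G G' g, Finset.inter_comm]
    ring
  rw [key]
  have hub : ∑ k ∈ G' \ G, g k ≤ ((G' \ G).card : ℝ) * h + ((G' \ G).card : ℝ) * r := by
    have := Finset.sum_le_card_nsmul (G' \ G) g (h + r) fun k _ => (hg k).2
    rw [nsmul_eq_mul] at this
    linarith
  have hlb : ((G \ G').card : ℝ) * h ≤ ∑ k ∈ G \ G', g k := by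
    simpa using Finset.card_nsmul_le_sum (G \ G') g h fun k _ => (hg k).1
  have hcast : ((G' \ G).card : ℝ) = ((G \ G').card : ℝ) := by exact_mod_cast hcc
  have hfin : ((G' \ G).card : ℝ) * r ≤ 4 * N * r := by
    have : ((G' \ G).card : ℝ) ≤ 4 * N := by exact_mod_cast hccle
    nlinarith
  rw [hcast] at hub hfin
  linarith [hub, hlb, hfin]

lemma extend_aux (Ω : Set (ℝ × ℝ)) (h r : ℝ) (hr : 0 ≤ r) (u : ℝ × ℝ → ℝ)
    (hmono : ∀ p ∈ Ω, ∀ q ∈ Ω, p.1 ≤ q.1 → p.2 ≤ q.2 → u p ≤ u q)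
    (hrange : ∀ p ∈ Ω, u p ∈ Set.Icc h (h + r)) :
    ∃ v : ℝ × ℝ → ℝ, (∀ p q : ℝ × ℝ, p.1 ≤ q.1 → p.2 ≤ q.2 → v p ≤ v q) ∧
      (∀ p, v p ∈ Set.Icc h (h + r)) ∧ (∀ p ∈ Ω, v p = u p) := by
  set S : (ℝ × ℝ) → Set ℝ := fun p => insert h (u '' {q | q ∈ Ω ∧ q.1 ≤ p.1 ∧ q.2 ≤ p.2}) with hS
  have hsub : ∀ p, S p ⊆ Set.Icc h (h + r) := by
    intro p y hy
    rcases hy with rfl | ⟨q, hq, rfl⟩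
    · exact ⟨le_rfl, by linarith⟩
    · exact hrange q hq.1
  have hbdd : ∀ p, BddAbove (S p) := fun p => ⟨h + r, fun y hy => (hsub p hy).2⟩
  have hne : ∀ p, (S p).Nonempty := fun p => ⟨h, Set.mem_insert _ _⟩
  refine ⟨fun p => sSup (S p), ?_, ?_, ?_⟩
  · intro p q h1 h2
    refine csSup_le_csSup (hbdd q) (hne p) ?_
    rintro y (rfl | ⟨q', hq', rfl⟩)
    · exact Set.mem_insert _ _
    · exact Set.mem_insert_of_mem _ ⟨q', ⟨hq'.1, hq'.2.1.trans h1, hq'.2.2.trans h2⟩, rfl⟩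
  · intro p
    exact ⟨le_csSup (hbdd p) (Set.mem_insert _ _), csSup_le (hne p) fun y hy => (hsub p hy).2⟩
  · intro p hp
    refine le_antisymm (csSup_le (hne p) ?_) (le_csSup (hbdd p) ?_)
    · rintro y (rfl | ⟨q, hq, rfl⟩)
      · exact (hrange p hp).1
      · exact hmono q hq.1 p hp hq.2.1 hq.2.2
    · exact Set.mem_insert_of_mem _ ⟨p, ⟨hp, le_rfl, le_rfl⟩, rfl⟩



set_option synthInstance.maxHeartbeats 1000000 in
lemma closed_aux (Ω : Set (ℝ × ℝ)) (hΩ : IsOpen Ω) (h r : ℝ) :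
    IsClosed {f : Lp ℝ 1 (volume.restrict Ω) |
      ∃ u : ℝ × ℝ → ℝ,
        (∀ p ∈ Ω, ∀ q ∈ Ω, p.1 ≤ q.1 → p.2 ≤ q.2 → u p ≤ u q) ∧
        (∀ p ∈ Ω, u p ∈ Set.Icc h (h + r)) ∧
        (∀ᵐ p ∂(volume.restrict Ω), f p = u p)} := by
  set ν := volume.restrict Ω with hν
  refine IsSeqClosed.isClosed ?_
  intro F f hF htend
  choose U hUmono hUrange hUae using hF
  obtain ⟨ns, -, hae⟩ := (tendstoInMeasure_of_tendsto_Lp htend).exists_seq_tendsto_ae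
  set E : Set (ℝ × ℝ) := {x | x ∈ Ω ∧ Tendsto (fun i => U (ns i) x) atTop (𝓝 (f x))} with hE
  have hmemE : ∀ᵐ x ∂ν, x ∈ E := by
    filter_upwards [ae_restrict_mem hΩ.measurableSet,
      ae_all_iff.2 fun i => hUae (ns i), hae] with x h1 h2 h3
    exact ⟨h1, h3.congr fun i => h2 i⟩
  have hIcc : ∀ q ∈ E, f q ∈ Icc h (h + r) := fun q hq =>
    isClosed_Icc.mem_of_tendsto hq.2 (Eventually.of_forall fun i => hUrange (ns i) q hq.1)
  have hmonoE : ∀ q ∈ E, ∀ q' ∈ E, q.1 ≤ q'.1 → q.2 ≤ q'.2 → f q ≤ f q' :=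
    fun q hq q' hq' h1 h2 =>
      le_of_tendsto_of_tendsto' hq.2 hq'.2 fun i => hUmono (ns i) q hq.1 q' hq'.1 h1 h2
  set A : ℝ × ℝ → Set (ℝ × ℝ) := fun p => {q | q ∈ E ∧ p.1 ≤ q.1 ∧ p.2 ≤ q.2} with hA
  have hne : ∀ p ∈ Ω, (A p).Nonempty := by
    intro p hp
    obtain ⟨ε, hε, hball⟩ := Metric.isOpen_iff.1 hΩ p hp
    set box : Set (ℝ × ℝ) := Ioo p.1 (p.1 + ε / 2) ×ˢ Ioo p.2 (p.2 + ε / 2) with hbox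
    have hboxΩ : box ⊆ Ω := by
      intro q hq
      apply hball
      rw [Metric.mem_ball, Prod.dist_eq]
      obtain ⟨⟨ha1, ha2⟩, hb1, hb2⟩ := hq
      refine max_lt ?_ ?_ <;> rw [Real.dist_eq, abs_sub_lt_iff] <;>
        constructor <;> linarith
    have hvol : volume box ≠ 0 := by
      rw [hbox, show (volume : Measure (ℝ × ℝ)) = (volume : Measure ℝ).prod volume from
        Measure.volume_eq_prod ℝ ℝ, Measure.prod_prod, Real.volume_Ioo, Real.volume_Ioo]
      simp only [add_sub_cancel_left, ne_eq, mul_eq_zero, ENNReal.ofReal_eq_zero, not_or, not_le]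
      constructor <;> linarith
    have hEbox : (E ∩ box).Nonempty := by
      by_contra hcon
      rw [Set.not_nonempty_iff_eq_empty] at hcon
      have hsub : box ⊆ Eᶜ ∩ Ω := fun q hq =>
        ⟨fun hqE => (Set.eq_empty_iff_forall_notMem.1 hcon q) ⟨hqE, hq⟩, hboxΩ hq⟩
      have : ν Eᶜ = 0 := hmemE
      rw [hν, Measure.restrict_apply' hΩ.measurableSet] at this
      exact hvol (le_antisymm (this ▸ measure_mono hsub) (by simp))
    obtain ⟨q, hqE, hqbox⟩ := hEbox
    exact ⟨q, hqE, (hqbox.1.1).le, (hqbox.2.1).le⟩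
  have hbdd : ∀ p, BddBelow (f '' A p) := fun p =>
    ⟨h, fun y ⟨q, hq, hy⟩ => hy ▸ (hIcc q hq.1).1⟩
  set u : ℝ × ℝ → ℝ := fun p => sInf (f '' A p) with hu
  refine ⟨u, ?_, ?_, ?_⟩
  · intro p hp p' hp' h1 h2
    refine csInf_le_csInf (hbdd p) ((hne p' hp').image f) (Set.image_mono ?_)
    exact fun q hq => ⟨hq.1, h1.trans hq.2.1, h2.trans hq.2.2⟩
  · intro p hp
    obtain ⟨q, hq⟩ := hne p hp
    constructor
    · exact le_csInf ((hne p hp).image f) fun y ⟨q', hq', hy⟩ => hy ▸ (hIcc q' hq'.1).1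
    · exact csInf_le_of_le (hbdd p) (Set.mem_image_of_mem f hq) (hIcc q hq.1).2
  · filter_upwards [hmemE] with x hx
    refine le_antisymm ?_ ?_
    · exact le_csInf ⟨f x, Set.mem_image_of_mem f ⟨hx, le_rfl, le_rfl⟩⟩
        fun y ⟨q, hq, hy⟩ => hy ▸ hmonoE x hx q hq.1 hq.2.1 hq.2.2
    · exact csInf_le (hbdd x) (Set.mem_image_of_mem f ⟨hx, le_rfl, le_rfl⟩)

set_option maxHeartbeats 1000000 in

set_option synthInstance.maxHeartbeats 1000000 in
lemma tb_aux (Ω : Set (ℝ × ℝ)) (hΩ : IsOpen Ω) (hfin : volume Ω < ⊤) (h r : ℝ) (hr : 0 ≤ r) :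
    TotallyBounded {f : Lp ℝ 1 (volume.restrict Ω) |
      ∃ u : ℝ × ℝ → ℝ,
        (∀ p ∈ Ω, ∀ q ∈ Ω, p.1 ≤ q.1 → p.2 ≤ q.2 → u p ≤ u q) ∧
        (∀ p ∈ Ω, u p ∈ Set.Icc h (h + r)) ∧
        (∀ᵐ p ∂(volume.restrict Ω), f p = u p)} := by
  classical
  set ν := volume.restrict Ω with hν
  haveI : IsFiniteMeasure ν := by
    constructor
    rw [hν, Measure.restrict_apply_univ]
    exact hfin
  rw [Metric.totallyBounded_iff]
  intro ε hε
  -- choose K for the tail bound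
  obtain ⟨K, hK1, hKtail⟩ : ∃ K : ℕ, 1 ≤ K ∧
      ENNReal.ofReal r * volume (Ω \ (Ico (-(K : ℝ)) K ×ˢ Ico (-(K : ℝ)) K))
        ≤ ENNReal.ofReal (ε / 4) := by
    set Box : ℕ → Set (ℝ × ℝ) := fun n => Ico (-(n : ℝ)) n ×ˢ Ico (-(n : ℝ)) n with hBox
    have hmeas : ∀ n, NullMeasurableSet (Ω \ Box n) volume := fun n =>
      (hΩ.measurableSet.diff (measurableSet_Ico.prod measurableSet_Ico)).nullMeasurableSet
    have hanti : Antitone fun n => Ω \ Box n := by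
      intro a b hab
      refine diff_subset_diff_right ?_
      rintro x ⟨hx1, hx2⟩
      have : ((a : ℝ)) ≤ b := by exact_mod_cast hab
      exact ⟨⟨by linarith [hx1.1], lt_of_lt_of_le hx1.2 this⟩,
        ⟨by linarith [hx2.1], lt_of_lt_of_le hx2.2 this⟩⟩
    have hint : ⋂ n, (Ω \ Box n) = ∅ := by
      ext x
      simp only [Set.mem_iInter, Set.mem_empty_iff_false, iff_false, not_forall]
      refine ⟨⌈|x.1|⌉₊ + ⌈|x.2|⌉₊ + 1, fun hx => hx.2 ?_⟩
      have h1 := Nat.le_ceil |x.1|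
      have h2 := Nat.le_ceil |x.2|
      have ha1 := neg_abs_le x.1
      have ha2 := le_abs_self x.1
      have hb1 := neg_abs_le x.2
      have hb2 := le_abs_self x.2
      have hcast : ((⌈|x.1|⌉₊ + ⌈|x.2|⌉₊ + 1 : ℕ) : ℝ)
          = (⌈|x.1|⌉₊ : ℝ) + (⌈|x.2|⌉₊ : ℝ) + 1 := by push_cast; ring
      refine ⟨⟨?_, ?_⟩, ?_, ?_⟩ <;> rw [hcast] <;>
        [linarith; linarith; linarith; linarith]
    have htend := tendsto_measure_iInter_atTop (μ := volume) hmeas hanti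
      ⟨0, ((measure_mono Set.diff_subset).trans_lt hfin).ne⟩
    rw [hint, measure_empty] at htend
    set c : ENNReal := ENNReal.ofReal (ε / 4) / (ENNReal.ofReal r + 1) with hc
    have hcpos : 0 < c := by
      apply ENNReal.div_pos
      · simp [ENNReal.ofReal_eq_zero]; linarith
      · exact ENNReal.add_ne_top.2 ⟨ENNReal.ofReal_ne_top, ENNReal.one_ne_top⟩
    obtain ⟨n, hn⟩ := (htend.eventually_lt_const hcpos).exists
    refine ⟨max 1 n, le_max_left _ _, ?_⟩
    have hsub : volume (Ω \ Box (max 1 n)) ≤ volume (Ω \ Box n) :=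
      measure_mono (hanti (le_max_right _ _))
    exact le_trans (mul_le_mul' le_self_add (le_trans hsub hn.le)) ENNReal.mul_div_le
  set N : ℕ := max 1 ⌈16 * r * (K : ℝ) ^ 2 / ε⌉₊ with hNdef
  have hN1 : 1 ≤ N := le_max_left _ _
  have hNpos : (0 : ℝ) < N := by exact_mod_cast hN1
  have hKpos : (0 : ℝ) < K := by exact_mod_cast hK1
  set δ : ℝ := (K : ℝ) / N with hδdef
  have hδpos : 0 < δ := by positivity
  set δ' : ℝ := ε / (16 * (K : ℝ) ^ 2 + 1) with hδ'def
  have hδ'pos : 0 < δ' := by positivity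
  set m : ℕ := ⌊r / δ'⌋₊ + 1 with hmdef
  set Q : ℝ → ℝ := fun t => h + δ' * ⌊(t - h) / δ'⌋₊ with hQdef
  set V : Finset ℝ := (Finset.range m).image (fun i : ℕ => h + δ' * i) with hVdef
  set G : Finset (ℤ × ℤ) := Finset.Ico (-(N : ℤ)) N ×ˢ Finset.Ico (-(N : ℤ)) N with hGdef
  set gp : ℤ × ℤ → ℝ × ℝ := fun k => (δ * k.1, δ * k.2) with hgpdef
  set cell : ℤ × ℤ → Set (ℝ × ℝ) :=
    fun k => Ico (δ * k.1) (δ * (k.1 + 1)) ×ˢ Ico (δ * k.2) (δ * (k.2 + 1)) with hcelldef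
  set B : Set (ℝ × ℝ) := Ico (-(K : ℝ)) K ×ˢ Ico (-(K : ℝ)) K with hBdef
  set ci : ℝ × ℝ → ℤ × ℤ := fun x => (⌊x.1 / δ⌋, ⌊x.2 / δ⌋) with hcidef
  have hδN : δ * N = K := by
    rw [hδdef]; field_simp
  have hBmeas : MeasurableSet B := (measurableSet_Ico.prod measurableSet_Ico)
  have hcellmeas : ∀ k, MeasurableSet (cell k) :=
    fun k => (measurableSet_Ico.prod measurableSet_Ico)
  -- basic grid facts
  have hfloor : ∀ y : ℝ, δ * (⌊y / δ⌋ : ℝ) ≤ y ∧ y < δ * ((⌊y / δ⌋ : ℝ) + 1) := by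
    intro y
    have h1 := Int.floor_le (y / δ)
    have h2 := Int.lt_floor_add_one (y / δ)
    constructor
    · have := mul_le_mul_of_nonneg_left h1 hδpos.le
      rw [mul_div_cancel₀ _ hδpos.ne'] at this
      exact this
    · have := mul_lt_mul_of_pos_left h2 hδpos
      rw [mul_div_cancel₀ _ hδpos.ne'] at this
      push_cast at this ⊢
      linarith
  have hcell_ci : ∀ x ∈ B, ci x ∈ G ∧ x ∈ cell (ci x) := by
    intro x hx
    simp only [hBdef, Set.mem_prod, Set.mem_Ico] at hx
    constructor
    · simp only [hGdef, hcidef, Finset.mem_product, Finset.mem_Ico]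
      refine ⟨⟨?_, ?_⟩, ?_, ?_⟩
      · rw [Int.le_floor]; push_cast
        rw [le_div_iff₀ hδpos]
        nlinarith [hx.1.1, hδN]
      · rw [Int.floor_lt]; push_cast
        rw [div_lt_iff₀ hδpos]
        nlinarith [hx.1.2, hδN]
      · rw [Int.le_floor]; push_cast
        rw [le_div_iff₀ hδpos]
        nlinarith [hx.2.1, hδN]
      · rw [Int.floor_lt]; push_cast
        rw [div_lt_iff₀ hδpos]
        nlinarith [hx.2.2, hδN]
    · simp only [hcelldef, hcidef, Set.mem_prod, Set.mem_Ico]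
      exact ⟨⟨(hfloor x.1).1, (hfloor x.1).2⟩, (hfloor x.2).1, (hfloor x.2).2⟩
  have hci_eq : ∀ (k : ℤ × ℤ), ∀ x ∈ cell k, ci x = k := by
    intro k x hx
    simp only [hcelldef, Set.mem_prod, Set.mem_Ico] at hx
    have e1 : ⌊x.1 / δ⌋ = k.1 := by
      rw [Int.floor_eq_iff]
      constructor
      · rw [le_div_iff₀ hδpos]; nlinarith [hx.1.1]
      · rw [div_lt_iff₀ hδpos]; nlinarith [hx.1.2]
    have e2 : ⌊x.2 / δ⌋ = k.2 := by
      rw [Int.floor_eq_iff]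
      constructor
      · rw [le_div_iff₀ hδpos]; nlinarith [hx.2.1]
      · rw [div_lt_iff₀ hδpos]; nlinarith [hx.2.2]
    simp only [hcidef]
    exact Prod.ext e1 e2
  have hcellB : ∀ k ∈ G, cell k ⊆ B := by
    intro k hk x hx
    simp only [hGdef, Finset.mem_product, Finset.mem_Ico] at hk
    simp only [hcelldef, Set.mem_prod, Set.mem_Ico] at hx
    simp only [hBdef, Set.mem_prod, Set.mem_Ico]
    have c11 : (-(N : ℝ)) ≤ (k.1 : ℝ) := by exact_mod_cast hk.1.1
    have c12 : (k.1 : ℝ) + 1 ≤ (N : ℝ) := by exact_mod_cast hk.1.2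
    have c21 : (-(N : ℝ)) ≤ (k.2 : ℝ) := by exact_mod_cast hk.2.1
    have c22 : (k.2 : ℝ) + 1 ≤ (N : ℝ) := by exact_mod_cast hk.2.2
    refine ⟨⟨?_, ?_⟩, ?_, ?_⟩
    · nlinarith [hx.1.1, hδN]
    · nlinarith [hx.1.2, hδN]
    · nlinarith [hx.2.1, hδN]
    · nlinarith [hx.2.2, hδN]
  have hcellvol : ∀ k, volume (cell k) = ENNReal.ofReal (δ ^ 2) := by
    intro k
    rw [hcelldef]
    simp only []
    rw [show (volume : Measure (ℝ × ℝ)) = (volume : Measure ℝ).prod volume from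
      Measure.volume_eq_prod ℝ ℝ, Measure.prod_prod, Real.volume_Ico, Real.volume_Ico]
    rw [← ENNReal.ofReal_mul (by nlinarith [hδpos.le] : (0:ℝ) ≤ δ * (↑k.1 + 1) - δ * ↑k.1)]
    congr 1
    ring
  -- quantization facts
  have hQ1 : ∀ t, h ≤ t → Q t ≤ t ∧ t - Q t < δ' := by
    intro t ht
    have hz : 0 ≤ (t - h) / δ' := div_nonneg (by linarith) hδ'pos.le
    have h1 := Nat.floor_le hz
    have h2 := Nat.lt_floor_add_one ((t - h) / δ')
    have e1 : δ' * ((⌊(t - h) / δ'⌋₊ : ℝ)) ≤ t - h := by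
      have := mul_le_mul_of_nonneg_left h1 hδ'pos.le
      rwa [mul_div_cancel₀ _ hδ'pos.ne'] at this
    have e2 : t - h < δ' * ((⌊(t - h) / δ'⌋₊ : ℝ) + 1) := by
      have := mul_lt_mul_of_pos_left h2 hδ'pos
      rwa [mul_div_cancel₀ _ hδ'pos.ne'] at this
    constructor
    · simp only [hQdef]; linarith
    · simp only [hQdef]; nlinarith
  have hQV : ∀ t ∈ Set.Icc h (h + r), Q t ∈ V := by
    intro t ht
    simp only [hVdef, hQdef, Finset.mem_image, Finset.mem_range]
    refine ⟨⌊(t - h) / δ'⌋₊, ?_, rfl⟩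
    have hle : ⌊(t - h) / δ'⌋₊ ≤ ⌊r / δ'⌋₊ :=
      Nat.floor_le_floor ((div_le_div_iff_of_pos_right hδ'pos).2 (by linarith [ht.2]))
    omega
  -- candidate functions
  set Wfun : (ℤ × ℤ → ℝ) → ℝ × ℝ → ℝ := fun q x =>
    (∑ k ∈ G, (cell k).indicator (fun _ => q k) x) + (if x ∈ B then 0 else h) with hWdef
  have hWB : ∀ q : ℤ × ℤ → ℝ, ∀ x ∈ B, Wfun q x = q (ci x) := by
    intro q x hx
    obtain ⟨hciG, hcicell⟩ := hcell_ci x hx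
    simp only [hWdef]
    rw [if_pos hx, add_zero]
    rw [Finset.sum_eq_single_of_mem (ci x) hciG]
    · exact Set.indicator_of_mem hcicell _
    · intro k hkG hkne
      exact Set.indicator_of_notMem (fun hxk => hkne (hci_eq k x hxk).symm) _
  have hWnB : ∀ q : ℤ × ℤ → ℝ, ∀ x, x ∉ B → Wfun q x = h := by
    intro q x hx
    simp only [hWdef]
    rw [if_neg hx, Finset.sum_eq_zero, zero_add]
    intro k hk
    exact Set.indicator_of_notMem (fun hxk => hx (hcellB k hk hxk)) _
  have hWmeas : ∀ q : ℤ × ℤ → ℝ, Measurable (Wfun q) := by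
    intro q
    apply Measurable.add
    · exact Finset.measurable_sum _ fun k _ => (measurable_const.indicator (hcellmeas k))
    · exact Measurable.ite hBmeas measurable_const measurable_const
  set C : ℝ := |h| + δ' * m with hCdef
  have hVbound : ∀ t ∈ V, ‖t‖ ≤ C := by
    intro t ht
    simp only [hVdef, Finset.mem_image, Finset.mem_range] at ht
    obtain ⟨i, hi, rfl⟩ := ht
    have : (i : ℝ) ≤ (m : ℝ) := by exact_mod_cast hi.le
    rw [Real.norm_eq_abs, hCdef]
    calc |h + δ' * i| ≤ |h| + |δ' * i| := abs_add_le _ _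
      _ = |h| + δ' * i := by rw [abs_of_nonneg (mul_nonneg hδ'pos.le (Nat.cast_nonneg _))]
      _ ≤ |h| + δ' * m := by nlinarith
  have hWmem : ∀ q : ℤ × ℤ → ℝ, (∀ k, q k ∈ V) → MemLp (Wfun q) 1 ν := by
    intro q hq
    refine MemLp.of_bound ((hWmeas q).aestronglyMeasurable) C (ae_of_all _ fun x => ?_)
    by_cases hx : x ∈ B
    · rw [hWB q x hx]; exact hVbound _ (hq _)
    · rw [hWnB q x hx, Real.norm_eq_abs, hCdef]
      have : 0 ≤ δ' * m := mul_nonneg hδ'pos.le (Nat.cast_nonneg _)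
      linarith [le_abs_self h, neg_abs_le h, abs_nonneg h]
  set qof : ({k // k ∈ G} → {t // t ∈ V}) → ℤ × ℤ → ℝ :=
    fun σ k => if hk : k ∈ G then (σ ⟨k, hk⟩ : ℝ) else h + δ' * 0 with hqofdef
  have hqofV : ∀ σ, ∀ k, qof σ k ∈ V := by
    intro σ k
    simp only [hqofdef]
    split
    · exact (σ _).2
    · simp only [hVdef, Finset.mem_image, Finset.mem_range]
      exact ⟨0, by omega, by push_cast; ring⟩
  set Ψ : ({k // k ∈ G} → {t // t ∈ V}) → Lp ℝ 1 ν :=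
    fun σ => (hWmem (qof σ) (hqofV σ)).toLp (Wfun (qof σ)) with hΨdef
  refine ⟨Set.range Ψ, Set.finite_range Ψ, ?_⟩
  rintro f ⟨u, hmono, hrange, hae⟩
  obtain ⟨v, hvmono, hvrange, hveq⟩ := extend_aux Ω h r hr u hmono hrange
  set σ : {k // k ∈ G} → {t // t ∈ V} := fun k => ⟨Q (v (gp k)), hQV _ (hvrange _)⟩ with hσdef
  refine Set.mem_biUnion (Set.mem_range_self σ) ?_
  rw [Metric.mem_ball, Lp.dist_def]
  -- the main estimate
  have hcongr : eLpNorm (⇑f - ⇑(Ψ σ)) 1 ν = ∫⁻ x, ↑‖u x - Wfun (qof σ) x‖₊ ∂ν := by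
    have h1 : ⇑(Ψ σ) =ᵐ[ν] Wfun (qof σ) := MemLp.coeFn_toLp _
    have h2 : (⇑f - ⇑(Ψ σ)) =ᵐ[ν] fun x => u x - Wfun (qof σ) x := by
      filter_upwards [hae, h1] with x hx1 hx2
      simp only [Pi.sub_apply, hx1, hx2]
    rw [eLpNorm_congr_ae h2, eLpNorm_one_eq_lintegral_enorm]; rfl
  set d : ℤ × ℤ → ℝ := fun k => v (gp (k.1 + 1, k.2 + 1)) - v (gp k) with hddef
  have hd0 : ∀ k, 0 ≤ d k := by
    intro k
    refine sub_nonneg.2 (hvmono (gp k) (gp (k.1 + 1, k.2 + 1)) ?_ ?_) <;>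
      simp only [hgpdef] <;> push_cast <;> nlinarith [hδpos.le]
  have key : ∀ k ∈ G, ∀ x ∈ Ω ∩ cell k, ‖u x - Wfun (qof σ) x‖ ≤ d k + δ' := by
    intro k hk x hx
    obtain ⟨hxΩ, hxcell⟩ := hx
    have hxB : x ∈ B := hcellB k hk hxcell
    have hW : Wfun (qof σ) x = Q (v (gp k)) := by
      rw [hWB _ x hxB, hci_eq k x hxcell]
      simp only [hqofdef, hσdef]
      rw [dif_pos hk]
    have hux : u x = v x := (hveq x hxΩ).symm
    have hcellb := hxcell
    simp only [hcelldef, Set.mem_prod, Set.mem_Ico] at hcellb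
    have hv1 : v (gp k) ≤ v x := by
      refine hvmono (gp k) x ?_ ?_ <;> simp only [hgpdef]
      · exact hcellb.1.1
      · exact hcellb.2.1
    have hv2 : v x ≤ v (gp (k.1 + 1, k.2 + 1)) := by
      refine hvmono x (gp (k.1 + 1, k.2 + 1)) ?_ ?_ <;> simp only [hgpdef] <;> push_cast
      · exact hcellb.1.2.le
      · exact hcellb.2.2.le
    have hQk := hQ1 (v (gp k)) (hvrange (gp k)).1
    rw [hux, hW, Real.norm_eq_abs, abs_of_nonneg (by linarith [hQk.1])]
    simp only [hddef]
    linarith [hQk.2]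
  -- numeric facts
  have hNge : 16 * r * (K : ℝ) ^ 2 / ε ≤ (N : ℝ) := by
    refine le_trans (Nat.le_ceil _) (Nat.cast_le.2 ?_)
    exact le_max_right 1 ⌈16 * r * (K : ℝ) ^ 2 / ε⌉₊
  have hNge' : 16 * r * (K : ℝ) ^ 2 ≤ ε * N := by
    rw [div_le_iff₀ hε] at hNge
    linarith
  have hδ2 : δ ^ 2 = (K : ℝ) ^ 2 / (N : ℝ) ^ 2 := by
    rw [hδdef]; rw [div_pow]
  have n1 : 4 * (N : ℝ) * r * δ ^ 2 ≤ ε / 4 := by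
    have e : 4 * (N : ℝ) * r * ((K : ℝ) ^ 2 / (N : ℝ) ^ 2) = 4 * r * (K : ℝ) ^ 2 / N := by
      field_simp
    rw [hδ2, e, div_le_iff₀ hNpos]
    linarith [hNge']
  have hGcard : (G.card : ℝ) = 2 * (N : ℝ) * (2 * (N : ℝ)) := by
    have : G.card = 2 * N * (2 * N) := by
      rw [hGdef, Finset.card_product, Int.card_Ico]
      have e : ((N : ℤ) - -(N : ℤ)).toNat = 2 * N := by omega
      rw [e]
    rw [this]; push_cast; ring
  have n2 : (G.card : ℝ) * δ' * δ ^ 2 ≤ ε / 4 := by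
    have he : (G.card : ℝ) * δ' * δ ^ 2 = 4 * (K : ℝ) ^ 2 * δ' := by
      rw [hGcard, hδ2]
      field_simp
      ring
    have hD : (0 : ℝ) < 16 * (K : ℝ) ^ 2 + 1 := by positivity
    rw [he, hδ'def, ← mul_div_assoc, div_le_iff₀ hD]
    nlinarith [mul_nonneg hε.le (sq_nonneg (K : ℝ))]
  have hbound : ∫⁻ x, ↑‖u x - Wfun (qof σ) x‖₊ ∂ν ≤ ENNReal.ofReal (3 * (ε / 4)) := by
    have hcell_bound : ∫⁻ x in Ω ∩ B, ↑‖u x - Wfun (qof σ) x‖₊ ∂volume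
        ≤ ENNReal.ofReal (ε / 2) := by
      have hsub : Ω ∩ B ⊆ ⋃ k ∈ G, (Ω ∩ cell k) := by
        rintro x ⟨hxΩ, hxB⟩
        obtain ⟨h1, h2⟩ := hcell_ci x hxB
        exact Set.mem_biUnion h1 ⟨hxΩ, h2⟩
      refine le_trans (lintegral_mono_set hsub)
        (le_trans (lintegral_biUnion_finset_le' G _ _ _) ?_)
      have hterm : ∀ k ∈ G, ∫⁻ x in Ω ∩ cell k, ↑‖u x - Wfun (qof σ) x‖₊ ∂volume
          ≤ ENNReal.ofReal ((d k + δ') * δ ^ 2) := by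
        intro k hk
        calc ∫⁻ x in Ω ∩ cell k, ↑‖u x - Wfun (qof σ) x‖₊ ∂volume
            ≤ ∫⁻ _ in Ω ∩ cell k, ENNReal.ofReal (d k + δ') ∂volume := by
              refine lintegral_mono_ae ((ae_restrict_iff'
                (hΩ.measurableSet.inter (hcellmeas k))).2 (ae_of_all _ fun x hx => ?_))
              rw [← enorm_eq_nnnorm, Real.enorm_eq_ofReal_abs]
              exact ENNReal.ofReal_le_ofReal
                (by simpa [Real.norm_eq_abs] using key k hk x hx)
          _ = ENNReal.ofReal (d k + δ') * volume (Ω ∩ cell k) := setLIntegral_const _ _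
          _ ≤ ENNReal.ofReal (d k + δ') * volume (cell k) :=
              mul_le_mul_right (measure_mono Set.inter_subset_right) _
          _ = ENNReal.ofReal (d k + δ') * ENNReal.ofReal (δ ^ 2) := by rw [hcellvol k]
          _ = ENNReal.ofReal ((d k + δ') * δ ^ 2) :=
              (ENNReal.ofReal_mul (by linarith [hd0 k])).symm
      refine le_trans (Finset.sum_le_sum hterm) ?_
      rw [← ENNReal.ofReal_sum_of_nonneg
        (fun k _ => mul_nonneg (by linarith [hd0 k]) (sq_nonneg δ))]
      apply ENNReal.ofReal_le_ofReal
      have hsum : ∑ k ∈ G, (d k + δ') * δ ^ 2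
          = (∑ k ∈ G, d k) * δ ^ 2 + (G.card : ℝ) * δ' * δ ^ 2 := by
        rw [← Finset.sum_mul, Finset.sum_add_distrib, Finset.sum_const, nsmul_eq_mul]
        ring
      rw [hsum]
      have htel : ∑ k ∈ G, d k ≤ 4 * N * r :=
        telescope_aux N h r hr (fun k => v (gp k)) (fun k => hvrange (gp k))
      have h1 : (∑ k ∈ G, d k) * δ ^ 2 ≤ (4 * N * r) * δ ^ 2 :=
        mul_le_mul_of_nonneg_right htel (sq_nonneg δ)
      have h2 : (4 * (N : ℝ) * r) * δ ^ 2 ≤ ε / 4 := by linarith [n1]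
      linarith [n2]
    have htail : ∫⁻ x in Ω \ B, ↑‖u x - Wfun (qof σ) x‖₊ ∂volume
        ≤ ENNReal.ofReal (ε / 4) := by
      calc ∫⁻ x in Ω \ B, ↑‖u x - Wfun (qof σ) x‖₊ ∂volume
          ≤ ∫⁻ _ in Ω \ B, ENNReal.ofReal r ∂volume := by
            refine lintegral_mono_ae ((ae_restrict_iff'
              (hΩ.measurableSet.diff hBmeas)).2 (ae_of_all _ fun x hx => ?_))
            rw [← enorm_eq_nnnorm, Real.enorm_eq_ofReal_abs]
            refine ENNReal.ofReal_le_ofReal ?_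
            rw [hWnB _ x hx.2]
            have := hrange x hx.1
            rw [abs_le]
            exact ⟨by linarith [this.1], by linarith [this.2]⟩
        _ = ENNReal.ofReal r * volume (Ω \ B) := setLIntegral_const _ _
        _ ≤ ENNReal.ofReal (ε / 4) := hKtail
    calc ∫⁻ x, ↑‖u x - Wfun (qof σ) x‖₊ ∂ν
        = ∫⁻ x in Ω, ↑‖u x - Wfun (qof σ) x‖₊ ∂volume := by rw [hν]
      _ ≤ ∫⁻ x in (Ω ∩ B) ∪ (Ω \ B), ↑‖u x - Wfun (qof σ) x‖₊ ∂volume :=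
          lintegral_mono_set (Set.inter_union_diff Ω B).superset
      _ ≤ (∫⁻ x in Ω ∩ B, ↑‖u x - Wfun (qof σ) x‖₊ ∂volume)
          + ∫⁻ x in Ω \ B, ↑‖u x - Wfun (qof σ) x‖₊ ∂volume := lintegral_union_le _ _ _
      _ ≤ ENNReal.ofReal (ε / 2) + ENNReal.ofReal (ε / 4) := add_le_add hcell_bound htail
      _ = ENNReal.ofReal (3 * (ε / 4)) := by
          rw [← ENNReal.ofReal_add (by linarith) (by linarith)]
          congr 1
          ring
  rw [hcongr]
  calc (∫⁻ x, ↑‖u x - Wfun (qof σ) x‖₊ ∂ν).toReal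
      ≤ 3 * (ε / 4) := ENNReal.toReal_le_of_le_ofReal (by positivity) hbound
    _ < ε := by linarith

theorem stmt5 (Ω : Set (ℝ × ℝ)) (hΩ : IsOpen Ω) (hfin : volume Ω < ⊤)
    (h r : ℝ) (hr : 0 ≤ r) :
    IsCompact {f : Lp ℝ 1 (volume.restrict Ω) |
      ∃ u : ℝ × ℝ → ℝ,
        (∀ p ∈ Ω, ∀ q ∈ Ω, p.1 ≤ q.1 → p.2 ≤ q.2 → u p ≤ u q) ∧
        (∀ p ∈ Ω, u p ∈ Set.Icc h (h + r)) ∧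
        (∀ᵐ p ∂(volume.restrict Ω), f p = u p)} :=
  (tb_aux Ω hΩ hfin h r hr).isCompact_of_isClosed (closed_aux Ω hΩ h r)
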